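/- In the setting of regularized ERM with convex, $\rho(z)$-Lipschitz losses and regularization $\lambda>0$: the leave-one-out stability bound $\frac{1}{n+1}\sum_{i=1}^{n+1}\ell(z_i;\hat\theta_{-i}) \le \frac{1}{n+1}\sum_{i=1}^{n+1}\ell(z_i;\hat\theta_{n+1}) + \frac{2}{\lambda(n+1)^2}\sum_{i=1}^{n+1}\rho(z_i)^2$ holds deterministically for any $z_1,\ldots,z_{n+1}$. -/

import Mathlib

open Filter Topology

lemma strong_min_aux {E : Type*} [NormedAddCommGroup E] [InnerProductSpace ℝ E]
    (f : E → ℝ) (hf : ConvexOn ℝ Set.univ f) (lam : ℝ) (a : E)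
    (hmin : ∀ θ, f a + lam / 2 * ‖a‖ ^ 2 ≤ f θ + lam / 2 * ‖θ‖ ^ 2) (b : E) :
    f a + lam / 2 * ‖a‖ ^ 2 + lam / 2 * ‖b - a‖ ^ 2 ≤ f b + lam / 2 * ‖b‖ ^ 2 := by
  have h1 : ∀ t ∈ Set.Ioo (0:ℝ) 1,
      f a + lam / 2 * ‖a‖ ^ 2 + lam / 2 * (1 - t) * ‖b - a‖ ^ 2 ≤ f b + lam / 2 * ‖b‖ ^ 2 := by
    intro t ht
    obtain ⟨ht0, ht1⟩ := ht
    have hcvx := hf.2 (Set.mem_univ a) (Set.mem_univ b) (by linarith : (0:ℝ) ≤ 1 - t)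
      (le_of_lt ht0) (by ring)
    have expand : ‖(1 - t) • a + t • b‖ ^ 2
        = (1 - t) * ‖a‖ ^ 2 + t * ‖b‖ ^ 2 - t * (1 - t) * ‖b - a‖ ^ 2 := by
      have e1 := @norm_add_sq_real E _ _ ((1 - t) • a) (t • b)
      have e2 := @norm_sub_sq_real E _ _ b a
      rw [e1, e2]
      simp only [norm_smul, real_inner_smul_left, real_inner_smul_right, mul_pow, sq_abs,
        Real.norm_eq_abs, real_inner_comm b a]
      ring
    have hm := hmin ((1 - t) • a + t • b)
    rw [expand] at hm
    have hkey : t * (f a + lam / 2 * ‖a‖ ^ 2 + lam / 2 * (1 - t) * ‖b - a‖ ^ 2)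
        ≤ t * (f b + lam / 2 * ‖b‖ ^ 2) := by
      simp only [smul_eq_mul] at hcvx
      nlinarith [hm, hcvx]
    exact le_of_mul_le_mul_left hkey ht0
  have h2 : Tendsto (fun t : ℝ => f a + lam / 2 * ‖a‖ ^ 2 + lam / 2 * (1 - t) * ‖b - a‖ ^ 2)
      (𝓝[>] (0:ℝ)) (𝓝 (f a + lam / 2 * ‖a‖ ^ 2 + lam / 2 * (1 - 0) * ‖b - a‖ ^ 2)) := by
    apply Tendsto.mono_left _ nhdsWithin_le_nhds
    exact Continuous.tendsto (by continuity) 0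
  have h3 : ∀ᶠ t in 𝓝[>] (0:ℝ),
      f a + lam / 2 * ‖a‖ ^ 2 + lam / 2 * (1 - t) * ‖b - a‖ ^ 2 ≤ f b + lam / 2 * ‖b‖ ^ 2 := by
    filter_upwards [Ioo_mem_nhdsGT_of_mem (by constructor <;> norm_num : (0:ℝ) ∈ Set.Ico 0 1)]
      with t ht using h1 t ht
  have := le_of_tendsto h2 h3
  simpa using this

set_option maxHeartbeats 1000000 in
/-- **Leave-one-out loss stability of regularized ERM** (Proposition 6): with convex
`ρ(z)`-Lipschitz losses and regularization `λ > 0`, the average leave-one-out loss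
exceeds the full-data loss by at most `(2/(λ(n+1)²)) ∑ᵢ ρ(zᵢ)²`, deterministically. -/
theorem erm_loss_stability
    {𝒵 : Type*} (d n : ℕ) (hn : 0 < n)
    (z : Fin (n + 1) → 𝒵) (ℓ : 𝒵 → EuclideanSpace ℝ (Fin d) → ℝ) (ρ : 𝒵 → ℝ)
    (hρ : ∀ w, 0 ≤ ρ w)
    (hconv : ∀ w, ConvexOn ℝ Set.univ (ℓ w))
    (hlip : ∀ w θ θ', |ℓ w θ - ℓ w θ'| ≤ ρ w * ‖θ - θ'‖)
    (lam : ℝ) (hlam : 0 < lam)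
    (θfull : EuclideanSpace ℝ (Fin d)) (θm : Fin (n + 1) → EuclideanSpace ℝ (Fin d))
    -- θfull minimizes the full-data regularized empirical risk
    (hfull : ∀ θ, (1 / (n + 1 : ℝ)) * ∑ j : Fin (n + 1), ℓ (z j) θfull + lam / 2 * ‖θfull‖ ^ 2
      ≤ (1 / (n + 1 : ℝ)) * ∑ j : Fin (n + 1), ℓ (z j) θ + lam / 2 * ‖θ‖ ^ 2)
    -- θm i minimizes the leave-one-out regularized empirical risk
    (hm : ∀ (i : Fin (n + 1)) (θ),
      (1 / (n : ℝ)) * ∑ j ∈ Finset.univ.erase i, ℓ (z j) (θm i) + lam / 2 * ‖θm i‖ ^ 2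
        ≤ (1 / (n : ℝ)) * ∑ j ∈ Finset.univ.erase i, ℓ (z j) θ + lam / 2 * ‖θ‖ ^ 2) :
    (1 / (n + 1 : ℝ)) * ∑ i : Fin (n + 1), ℓ (z i) (θm i)
      ≤ (1 / (n + 1 : ℝ)) * (∑ i : Fin (n + 1), ℓ (z i) θfull)
        + (2 / (lam * (n + 1 : ℝ) ^ 2)) * ∑ i : Fin (n + 1), ρ (z i) ^ 2 := by
  have hnR : (0:ℝ) < (n : ℝ) := by exact_mod_cast hn
  have hNR : (0:ℝ) < (n : ℝ) + 1 := by linarith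
  set S : ℝ := ∑ j : Fin (n + 1), ρ (z j) with hS
  set Q : ℝ := ∑ j : Fin (n + 1), ρ (z j) ^ 2 with hQ
  -- convexity of scaled partial sums
  have hconvSum : ∀ (c : ℝ), 0 ≤ c → ∀ (s : Finset (Fin (n + 1))),
      ConvexOn ℝ Set.univ (fun θ : EuclideanSpace ℝ (Fin d) => c * ∑ j ∈ s, ℓ (z j) θ) := by
    intro c hc s
    refine ⟨convex_univ, ?_⟩
    intro a _ b _ p q hp hq hpq
    simp only [smul_eq_mul]
    have h : ∀ j ∈ s, ℓ (z j) (p • a + q • b) ≤ p * ℓ (z j) a + q * ℓ (z j) b := by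
      intro j _
      have := (hconv (z j)).2 (Set.mem_univ a) (Set.mem_univ b) hp hq hpq
      simpa using this
    have hsum := Finset.sum_le_sum h
    calc c * ∑ j ∈ s, ℓ (z j) (p • a + q • b)
        ≤ c * ∑ j ∈ s, (p * ℓ (z j) a + q * ℓ (z j) b) :=
          mul_le_mul_of_nonneg_left hsum hc
      _ = p * (c * ∑ j ∈ s, ℓ (z j) a) + q * (c * ∑ j ∈ s, ℓ (z j) b) := by
          rw [Finset.sum_add_distrib, ← Finset.mul_sum, ← Finset.mul_sum]; ring
  -- per-index key bound
  have key : ∀ i : Fin (n + 1), ℓ (z i) (θm i) - ℓ (z i) θfull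
      ≤ ρ (z i) * (ρ (z i) / ((n:ℝ) + 1) + (S - ρ (z i)) / ((n:ℝ) * ((n:ℝ) + 1))) / lam := by
    intro i
    have hSi : 0 ≤ S - ρ (z i) := by
      rw [hS, ← Finset.sum_erase_eq_sub (Finset.mem_univ i)]
      exact Finset.sum_nonneg fun j _ => hρ (z j)
    have hci : 0 ≤ ρ (z i) / ((n:ℝ) + 1) + (S - ρ (z i)) / ((n:ℝ) * ((n:ℝ) + 1)) := by
      have := hρ (z i); positivity
    have hA := strong_min_aux (fun θ => (1 / (n + 1 : ℝ)) * ∑ j : Fin (n + 1), ℓ (z j) θ)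
      (hconvSum _ (by positivity) _) lam θfull hfull (θm i)
    have hB := strong_min_aux (fun θ => (1 / (n : ℝ)) * ∑ j ∈ Finset.univ.erase i, ℓ (z j) θ)
      (hconvSum _ (by positivity) _) lam (θm i) (hm i) θfull
    rw [norm_sub_rev θfull (θm i)] at hB
    set D : ℝ := ‖θm i - θfull‖ with hD
    have hDnn : 0 ≤ D := norm_nonneg _
    have hlipj : ∀ j, |ℓ (z j) (θm i) - ℓ (z j) θfull| ≤ ρ (z j) * D :=
      fun j => hlip (z j) _ _
    -- sums split
    have hAeq : (∑ j ∈ Finset.univ.erase i, ℓ (z j) (θm i)) + ℓ (z i) (θm i)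
        = ∑ j : Fin (n + 1), ℓ (z j) (θm i) :=
      Finset.sum_erase_add _ _ (Finset.mem_univ i)
    have hBeq : (∑ j ∈ Finset.univ.erase i, ℓ (z j) θfull) + ℓ (z i) θfull
        = ∑ j : Fin (n + 1), ℓ (z j) θfull :=
      Finset.sum_erase_add _ _ (Finset.mem_univ i)
    have step1 : lam * D ^ 2
        ≤ (1 / ((n:ℝ) + 1)) * ((∑ j : Fin (n + 1), ℓ (z j) (θm i))
            - ∑ j : Fin (n + 1), ℓ (z j) θfull)
          + (1 / (n:ℝ)) * ((∑ j ∈ Finset.univ.erase i, ℓ (z j) θfull)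
            - ∑ j ∈ Finset.univ.erase i, ℓ (z j) (θm i)) := by
      have e1 : (1 / ((n:ℝ) + 1)) * ((∑ j : Fin (n + 1), ℓ (z j) (θm i))
            - ∑ j : Fin (n + 1), ℓ (z j) θfull)
          = (1 / ((n:ℝ) + 1)) * (∑ j : Fin (n + 1), ℓ (z j) (θm i))
            - (1 / ((n:ℝ) + 1)) * (∑ j : Fin (n + 1), ℓ (z j) θfull) := by ring
      have e2 : (1 / (n:ℝ)) * ((∑ j ∈ Finset.univ.erase i, ℓ (z j) θfull)
            - ∑ j ∈ Finset.univ.erase i, ℓ (z j) (θm i))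
          = (1 / (n:ℝ)) * (∑ j ∈ Finset.univ.erase i, ℓ (z j) θfull)
            - (1 / (n:ℝ)) * (∑ j ∈ Finset.univ.erase i, ℓ (z j) (θm i)) := by ring
      rw [e1, e2]
      push_cast at hA ⊢
      nlinarith [hA, hB]
    -- bound the RHS of step1
    have hui : ℓ (z i) (θm i) - ℓ (z i) θfull ≤ ρ (z i) * D := le_of_abs_le (hlipj i)
    have herase : (∑ j ∈ Finset.univ.erase i, ℓ (z j) θfull)
        - (∑ j ∈ Finset.univ.erase i, ℓ (z j) (θm i)) ≤ (S - ρ (z i)) * D := by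
      rw [← Finset.sum_sub_distrib]
      calc (∑ j ∈ Finset.univ.erase i, (ℓ (z j) θfull - ℓ (z j) (θm i)))
          ≤ ∑ j ∈ Finset.univ.erase i, ρ (z j) * D := by
            refine Finset.sum_le_sum fun j _ => ?_
            have := (abs_le.mp (hlipj j)).1
            linarith
        _ = (S - ρ (z i)) * D := by
            rw [← Finset.sum_mul, hS, Finset.sum_erase_eq_sub (Finset.mem_univ i)]
    have herase2 : (∑ j ∈ Finset.univ.erase i, ℓ (z j) (θm i))
        - (∑ j ∈ Finset.univ.erase i, ℓ (z j) θfull) ≤ (S - ρ (z i)) * D := by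
      rw [← Finset.sum_sub_distrib]
      calc (∑ j ∈ Finset.univ.erase i, (ℓ (z j) (θm i) - ℓ (z j) θfull))
          ≤ ∑ j ∈ Finset.univ.erase i, ρ (z j) * D := by
            refine Finset.sum_le_sum fun j _ => ?_
            exact le_of_abs_le (hlipj j)
        _ = (S - ρ (z i)) * D := by
            rw [← Finset.sum_mul, hS, Finset.sum_erase_eq_sub (Finset.mem_univ i)]
    have hquad : lam * D ^ 2
        ≤ (ρ (z i) / ((n:ℝ) + 1) + (S - ρ (z i)) / ((n:ℝ) * ((n:ℝ) + 1))) * D := by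
      have hsplitA : (∑ j : Fin (n + 1), ℓ (z j) (θm i)) - ∑ j : Fin (n + 1), ℓ (z j) θfull
          = (ℓ (z i) (θm i) - ℓ (z i) θfull)
            + ((∑ j ∈ Finset.univ.erase i, ℓ (z j) (θm i))
              - ∑ j ∈ Finset.univ.erase i, ℓ (z j) θfull) := by
        rw [← hAeq, ← hBeq]; ring
      rw [hsplitA] at step1
      have hcoef : 1 / ((n:ℝ) + 1) - 1 / (n:ℝ) = -(1 / ((n:ℝ) * ((n:ℝ) + 1))) := by
        field_simp; ring
      have h1pos : (0:ℝ) < 1 / ((n:ℝ) + 1) := by positivity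
      have h2pos : (0:ℝ) < 1 / ((n:ℝ) * ((n:ℝ) + 1)) := by positivity
      have b1 : (1 / ((n:ℝ) + 1)) * (ℓ (z i) (θm i) - ℓ (z i) θfull)
          ≤ (1 / ((n:ℝ) + 1)) * (ρ (z i) * D) := mul_le_mul_of_nonneg_left hui h1pos.le
      have b2 : (1 / ((n:ℝ) + 1)) * ((∑ j ∈ Finset.univ.erase i, ℓ (z j) (θm i))
              - ∑ j ∈ Finset.univ.erase i, ℓ (z j) θfull)
            + (1 / (n:ℝ)) * ((∑ j ∈ Finset.univ.erase i, ℓ (z j) θfull)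
              - ∑ j ∈ Finset.univ.erase i, ℓ (z j) (θm i))
          ≤ (1 / ((n:ℝ) * ((n:ℝ) + 1))) * ((S - ρ (z i)) * D) := by
        have hrw : (1 / ((n:ℝ) + 1)) * ((∑ j ∈ Finset.univ.erase i, ℓ (z j) (θm i))
              - ∑ j ∈ Finset.univ.erase i, ℓ (z j) θfull)
            + (1 / (n:ℝ)) * ((∑ j ∈ Finset.univ.erase i, ℓ (z j) θfull)
              - ∑ j ∈ Finset.univ.erase i, ℓ (z j) (θm i))
            = (1 / ((n:ℝ) + 1) - 1 / (n:ℝ))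
              * ((∑ j ∈ Finset.univ.erase i, ℓ (z j) (θm i))
                - ∑ j ∈ Finset.univ.erase i, ℓ (z j) θfull) := by ring
        rw [hrw, hcoef]
        have := mul_le_mul_of_nonneg_left herase h2pos.le
        nlinarith [this]
      have hfinal : (1 / ((n:ℝ) + 1)) * (ρ (z i) * D)
            + (1 / ((n:ℝ) * ((n:ℝ) + 1))) * ((S - ρ (z i)) * D)
          = (ρ (z i) / ((n:ℝ) + 1) + (S - ρ (z i)) / ((n:ℝ) * ((n:ℝ) + 1))) * D := by
        ring
      linarith [step1, b1, b2]
    -- conclude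
    rcases eq_or_lt_of_le hDnn with h0 | hpos
    · have : |ℓ (z i) (θm i) - ℓ (z i) θfull| ≤ 0 := by
        have := hlipj i; rw [← h0] at this; simpa using this
      have h1 := (abs_le.mp this).2
      have h2 : 0 ≤ ρ (z i) * (ρ (z i) / ((n:ℝ) + 1) + (S - ρ (z i)) / ((n:ℝ) * ((n:ℝ) + 1))) / lam :=
        div_nonneg (mul_nonneg (hρ (z i)) hci) hlam.le
      linarith
    · have hDle : D ≤ (ρ (z i) / ((n:ℝ) + 1) + (S - ρ (z i)) / ((n:ℝ) * ((n:ℝ) + 1))) / lam := by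
        rw [le_div_iff₀ hlam]
        have h' : (lam * D) * D ≤ (ρ (z i) / ((n:ℝ) + 1) + (S - ρ (z i)) / ((n:ℝ) * ((n:ℝ) + 1))) * D := by
          calc (lam * D) * D = lam * D ^ 2 := by ring
            _ ≤ _ := hquad
        have h'' := le_of_mul_le_mul_right h' hpos
        linarith
      calc ℓ (z i) (θm i) - ℓ (z i) θfull ≤ ρ (z i) * D := hui
        _ ≤ ρ (z i) * ((ρ (z i) / ((n:ℝ) + 1) + (S - ρ (z i)) / ((n:ℝ) * ((n:ℝ) + 1))) / lam) :=
            mul_le_mul_of_nonneg_left hDle (hρ (z i))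
        _ = ρ (z i) * (ρ (z i) / ((n:ℝ) + 1) + (S - ρ (z i)) / ((n:ℝ) * ((n:ℝ) + 1))) / lam := by
            rw [mul_div_assoc]
  -- sum the key bounds
  have hsum : ∑ i : Fin (n + 1), (ℓ (z i) (θm i) - ℓ (z i) θfull)
      ≤ ∑ i : Fin (n + 1),
          ρ (z i) * (ρ (z i) / ((n:ℝ) + 1) + (S - ρ (z i)) / ((n:ℝ) * ((n:ℝ) + 1))) / lam :=
    Finset.sum_le_sum fun i _ => key i
  -- Cauchy-Schwarz
  have hCS : S * S ≤ ((n:ℝ) + 1) * Q := by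
    have h := sq_sum_le_card_mul_sum_sq (s := (Finset.univ : Finset (Fin (n + 1))))
      (f := fun j => ρ (z j))
    simp only [Finset.card_univ, Fintype.card_fin] at h
    rw [hS, hQ]
    push_cast at h ⊢
    nlinarith [h]
  have hT : ∑ i : Fin (n + 1),
        ρ (z i) * (ρ (z i) / ((n:ℝ) + 1) + (S - ρ (z i)) / ((n:ℝ) * ((n:ℝ) + 1))) / lam
      ≤ 2 / (lam * ((n:ℝ) + 1)) * Q := by
    have e : ∑ i : Fin (n + 1),
          ρ (z i) * (ρ (z i) / ((n:ℝ) + 1) + (S - ρ (z i)) / ((n:ℝ) * ((n:ℝ) + 1))) / lam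
        = (Q * (1 / ((n:ℝ) + 1)) + (S * S - Q) * (1 / ((n:ℝ) * ((n:ℝ) + 1)))) / lam := by
      rw [← Finset.sum_div]
      congr 1
      have hterm : ∀ i : Fin (n + 1),
          ρ (z i) * (ρ (z i) / ((n:ℝ) + 1) + (S - ρ (z i)) / ((n:ℝ) * ((n:ℝ) + 1)))
          = ρ (z i) ^ 2 * (1 / ((n:ℝ) + 1))
            + (ρ (z i) * S - ρ (z i) ^ 2) * (1 / ((n:ℝ) * ((n:ℝ) + 1))) := by
        intro i; field_simp
      rw [Finset.sum_congr rfl fun i _ => hterm i, Finset.sum_add_distrib, ← Finset.sum_mul,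
        ← Finset.sum_mul]
      have h2' : ∑ i : Fin (n + 1), (ρ (z i) * S - ρ (z i) ^ 2) = S * S - Q := by
        rw [Finset.sum_sub_distrib, ← Finset.sum_mul, ← hS, ← hQ]
      rw [h2', ← hQ]
    rw [e]
    have h1 : S * S - Q ≤ (n:ℝ) * Q := by nlinarith [hCS]
    have hQnn : 0 ≤ Q := Finset.sum_nonneg fun j _ => sq_nonneg _
    rw [div_le_iff₀ hlam]
    have : 2 / (lam * ((n:ℝ) + 1)) * Q * lam = 2 * Q / ((n:ℝ) + 1) := by
      field_simp
    rw [this]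
    have h2 : (S * S - Q) * (1 / ((n:ℝ) * ((n:ℝ) + 1))) ≤ Q * (1 / ((n:ℝ) + 1)) := by
      have := mul_le_mul_of_nonneg_right h1 (le_of_lt (by positivity : (0:ℝ) < 1 / ((n:ℝ) * ((n:ℝ) + 1))))
      have e2 : (n:ℝ) * Q * (1 / ((n:ℝ) * ((n:ℝ) + 1))) = Q * (1 / ((n:ℝ) + 1)) := by
        field_simp
      linarith [this, e2.le, e2.ge]
    have e3 : Q * (1 / ((n:ℝ) + 1)) + Q * (1 / ((n:ℝ) + 1)) = 2 * Q / ((n:ℝ) + 1) := by ring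
    linarith
  -- finish
  have hfin : (∑ i : Fin (n + 1), ℓ (z i) (θm i)) - (∑ i : Fin (n + 1), ℓ (z i) θfull)
      ≤ 2 / (lam * ((n:ℝ) + 1)) * Q := by
    rw [← Finset.sum_sub_distrib]
    exact hsum.trans hT
  have hmulfin := mul_le_mul_of_nonneg_left hfin
    (le_of_lt (by positivity : (0:ℝ) < 1 / ((n:ℝ) + 1)))
  have heq : (1 / ((n:ℝ) + 1)) * (2 / (lam * ((n:ℝ) + 1)) * Q)
      = 2 / (lam * ((n:ℝ) + 1) ^ 2) * Q := by
    field_simp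
  rw [heq] at hmulfin
  push_cast
  nlinarith [hmulfin]
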